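/- Let T > 0, let H : ℝ → Matrix (Fin d) (Fin d) ℝ be continuous on [0,T] with each H(τ) symmetric, and let f : ℝ → ℝ^d be continuous on [0,T]. Suppose v : ℝ → ℝ^d solves the forward sensitivity equation v'(τ) = −H(τ).mulVec v(τ) + f(τ) on [0,T] with v(0) = 0, and p : ℝ → ℝ^d solves the backward sensitivity equation p'(τ) = H(τ).mulVec p(τ) on [0,T]. Then ⟨p(T), v(T)⟩ = ∫_{0}^{T} ⟨p(τ), f(τ)⟩ dτ, where ⟨·,·⟩ is the Euclidean inner product on ℝ^d. -/

import Mathlib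

open MeasureTheory Matrix

/-- **Adjoint pairing identity of one-run reweighting sensitivity.** If `v` solves the
forward sensitivity equation `v' = −H(τ) v + f(τ)` with `v(0) = 0` and `p` solves the
backward sensitivity equation `p' = H(τ) p`, where each `H(τ)` is symmetric, then
`⟨p(T), v(T)⟩ = ∫_0^T ⟨p(τ), f(τ)⟩ dτ`. -/
theorem adjoint_pairing_identity {d : ℕ} (T : ℝ) (hT : 0 < T)
    (H : ℝ → Matrix (Fin d) (Fin d) ℝ)
    (hHcont : ∀ i j, ContinuousOn (fun τ => H τ i j) (Set.Icc 0 T))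
    (hHsymm : ∀ τ ∈ Set.Icc (0 : ℝ) T, (H τ).IsSymm)
    (f : ℝ → Fin d → ℝ)
    (hf : ∀ i, ContinuousOn (fun τ => f τ i) (Set.Icc 0 T))
    (v p : ℝ → Fin d → ℝ)
    (hv : ∀ τ ∈ Set.Icc (0 : ℝ) T, HasDerivAt v (-(H τ).mulVec (v τ) + f τ) τ)
    (hv0 : v 0 = 0)
    (hp : ∀ τ ∈ Set.Icc (0 : ℝ) T, HasDerivAt p ((H τ).mulVec (p τ)) τ) :
    p T ⬝ᵥ v T = ∫ τ in (0 : ℝ)..T, p τ ⬝ᵥ f τ := by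
  -- the pairing g(τ) = ⟨p τ, v τ⟩ has derivative ⟨p τ, f τ⟩
  have hderiv : ∀ τ ∈ Set.Icc (0 : ℝ) T,
      HasDerivAt (fun τ => p τ ⬝ᵥ v τ) (p τ ⬝ᵥ f τ) τ := by
    intro τ hτ
    have hpτ := hp τ hτ
    have hvτ := hv τ hτ
    have hcomp : HasDerivAt (fun τ => p τ ⬝ᵥ v τ)
        (((H τ).mulVec (p τ)) ⬝ᵥ v τ + p τ ⬝ᵥ (-(H τ).mulVec (v τ) + f τ)) τ := by
      simp only [dotProduct, Finset.mul_sum, Finset.sum_mul, ← Finset.sum_add_distrib]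
      apply HasDerivAt.fun_sum
      intro i _
      exact ((hasDerivAt_pi.1 hpτ i).mul (hasDerivAt_pi.1 hvτ i))
    convert hcomp using 1
    have hsym : ((H τ).mulVec (p τ)) ⬝ᵥ v τ = p τ ⬝ᵥ ((H τ).mulVec (v τ)) := by
      rw [Matrix.dotProduct_mulVec, ← Matrix.mulVec_transpose, (hHsymm τ hτ).eq]
    rw [hsym, dotProduct_add, dotProduct_neg]
    ring
  -- continuity of p on [0,T]
  have hpcont : ContinuousOn p (Set.Icc 0 T) := fun τ hτ =>
    ((hp τ hτ).continuousAt).continuousWithinAt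
  have hfcont : ContinuousOn (fun τ => p τ ⬝ᵥ f τ) (Set.Icc 0 T) := by
    apply continuousOn_finset_sum
    intro i _
    exact ((continuous_apply i).comp_continuousOn hpcont).mul (hf i)
  have hInt : IntervalIntegrable (fun τ => p τ ⬝ᵥ f τ) volume 0 T := by
    apply ContinuousOn.intervalIntegrable
    rwa [Set.uIcc_of_le hT.le]
  have := intervalIntegral.integral_eq_sub_of_hasDerivAt
    (f := fun τ => p τ ⬝ᵥ v τ) (f' := fun τ => p τ ⬝ᵥ f τ)
    (by rw [Set.uIcc_of_le hT.le]; exact hderiv) hInt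
  simp only [hv0, dotProduct_zero, sub_zero] at this
  exact this.symm
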